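/- Let ψ : ℝ^{α+2} → ℝ and φ : ℝ^{β+2} → ℝ be c-Lipschitz for the sup metric, t > 1, M ≥ 1, and for k, l ∈ {1,2} let f^k(l) be (t,M)-close to ψ and g^k(l) be (t,M)-close to φ. For l = 1, 2 let positive double sequences (z_l(i,j)), (w_l(i,j)) satisfy z_l(i,0) = z_i(l), w_l(0,j) = w^j(l), and the dynamical inequalities f^1(l)(w_l(i,j), z_l(i,j), …, z_l(i+α,j)) ≤ z_l(i,j+1) ≤ f^2(l)(w_l(i,j), z_l(i,j), …, z_l(i+α,j)) and g^1(l)(w_l(i,j), z_l(i,j), …, z_l(i+β,j)) ≤ w_l(i+1,j) ≤ g^2(l)(w_l(i,j), z_l(i,j), …, z_l(i+β,j)). Suppose ρ ≥ 1 satisfies (z_i(1)/z_i(2))^{±1} ≤ ρ and (w^j(1)/w^j(2))^{±1} ≤ ρ for all i, j. Then for all i, j: (z_1(i,j+1)/z_2(i,j+1))^{±1} ≤ M^{6·P_{i+j(γ+1)}(c)} · ρ^{c̃^{i+1+j(γ+1)}} and (w_1(i+1,j)/w_2(i+1,j))^{±1} ≤ M^{6·P_{i+j(γ+1)}(c)}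 · ρ^{c̃^{i+1+j(γ+1)}}. -/
import Mathlib

private def Bfun (μ r ct c : ℝ) (n : ℕ) : ℝ :=
  6 * μ * (∑ k ∈ Finset.range n, c ^ k) + r * ct ^ n

private lemma Bfun_r_le {μ r ct c : ℝ} (hμ : 0 ≤ μ) (hr : 0 ≤ r) (hct : 1 ≤ ct)
    (hc : 0 ≤ c) (n : ℕ) : r ≤ Bfun μ r ct c n := by
  have h1 : (0:ℝ) ≤ ∑ k ∈ Finset.range n, c ^ k :=
    Finset.sum_nonneg fun k _ => pow_nonneg hc k
  have h2 : (1:ℝ) ≤ ct ^ n := by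
    calc (1:ℝ) = ct ^ 0 := (pow_zero ct).symm
      _ ≤ ct ^ n := pow_le_pow_right₀ hct (Nat.zero_le n)
  have h3 : r * 1 ≤ r * ct ^ n := mul_le_mul_of_nonneg_left h2 hr
  unfold Bfun; nlinarith

private lemma Bfun_nonneg {μ r ct c : ℝ} (hμ : 0 ≤ μ) (hr : 0 ≤ r) (hct : 1 ≤ ct)
    (hc : 0 ≤ c) (n : ℕ) : 0 ≤ Bfun μ r ct c n :=
  le_trans hr (Bfun_r_le hμ hr hct hc n)

private lemma Bfun_mono {μ r ct c : ℝ} (hμ : 0 ≤ μ) (hr : 0 ≤ r) (hct : 1 ≤ ct)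
    (hc : 0 ≤ c) {m n : ℕ} (h : m ≤ n) : Bfun μ r ct c m ≤ Bfun μ r ct c n := by
  unfold Bfun
  have h1 : (∑ k ∈ Finset.range m, c ^ k) ≤ ∑ k ∈ Finset.range n, c ^ k :=
    Finset.sum_le_sum_of_subset_of_nonneg (Finset.range_subset_range.mpr h)
      (fun k _ _ => pow_nonneg hc k)
  have h2 : ct ^ m ≤ ct ^ n := pow_le_pow_right₀ (by linarith) h
  have h3 : r * ct ^ m ≤ r * ct ^ n := mul_le_mul_of_nonneg_left h2 hr
  nlinarith

private lemma Bfun_step {μ r ct c : ℝ} (hμ : 0 ≤ μ) (hr : 0 ≤ r) (hct : 1 ≤ ct)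
    (hc : 0 ≤ c) (hcct : c ≤ ct) (n : ℕ) :
    2 * μ + c * Bfun μ r ct c n ≤ Bfun μ r ct c (n + 1) := by
  unfold Bfun
  rw [geom_sum_succ, pow_succ]
  have h2 : (0:ℝ) ≤ ct ^ n := pow_nonneg (by linarith) n
  have h3 : c * (r * ct ^ n) ≤ ct * (r * ct ^ n) :=
    mul_le_mul_of_nonneg_right hcct (mul_nonneg hr h2)
  have hS : (0:ℝ) ≤ ∑ k ∈ Finset.range n, c ^ k :=
    Finset.sum_nonneg fun k _ => pow_nonneg hc k
  nlinarith

/-- If `x` is sandwiched between two functions `(t,M)`-close to `ψ`, then `x` is close. -/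
private lemma close_aux {N : ℕ} {t M : ℝ} (ht : 1 < t)
    {ψ : (Fin N → ℝ) → ℝ} {y1 y2 x : ℝ}
    (hx : 0 < x) (hy1 : 0 < y1) {u : Fin N → ℝ}
    (h1 : |Real.log y1 / Real.log t - ψ u| ≤ Real.log M / Real.log t)
    (h2 : |Real.log y2 / Real.log t - ψ u| ≤ Real.log M / Real.log t)
    (hlow : y1 ≤ x) (hhigh : x ≤ y2) :
    |Real.log x / Real.log t - ψ u| ≤ Real.log M / Real.log t := by
  have hlt : 0 < Real.log t := Real.log_pos ht
  have e1 : Real.log y1 / Real.log t ≤ Real.log x / Real.log t :=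
    div_le_div_of_nonneg_right (Real.log_le_log hy1 hlow) hlt.le
  have e2 : Real.log x / Real.log t ≤ Real.log y2 / Real.log t :=
    div_le_div_of_nonneg_right (Real.log_le_log hx hhigh) hlt.le
  rw [abs_le] at h1 h2 ⊢
  constructor <;> [linarith [h1.1]; linarith [h2.2]]

private lemma two_close {N : ℕ} {c μ D : ℝ} (hc : 0 ≤ c)
    {ψ : (Fin N → ℝ) → ℝ} (hψ : ∀ v w, |ψ v - ψ w| ≤ c * dist v w)
    {u0 u1 : Fin N → ℝ} {x0 x1 : ℝ}
    (h0 : |x0 - ψ u0| ≤ μ) (h1 : |x1 - ψ u1| ≤ μ) (hD : dist u0 u1 ≤ D) :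
    |x0 - x1| ≤ 2 * μ + c * D := by
  have hd : |ψ u0 - ψ u1| ≤ c * D :=
    le_trans (hψ u0 u1) (mul_le_mul_of_nonneg_left hD hc)
  calc |x0 - x1| ≤ |x0 - ψ u0| + |ψ u0 - x1| := abs_sub_le _ _ _
    _ ≤ |x0 - ψ u0| + (|ψ u0 - ψ u1| + |ψ u1 - x1|) := by
        linarith [abs_sub_le (ψ u0) (ψ u1) x1]
    _ ≤ μ + (c * D + μ) := by
        have := abs_sub_comm x1 (ψ u1)
        linarith [h1, hd, (abs_sub_comm (ψ u1) x1).le]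
    _ = 2 * μ + c * D := by ring

theorem statement12 (α β : ℕ) (c t M : ℝ) (hc : 0 ≤ c) (ht : 1 < t) (hM : 1 ≤ M)
    (ψ : (Fin (α + 2) → ℝ) → ℝ) (φ : (Fin (β + 2) → ℝ) → ℝ)
    (hψ : ∀ v w : Fin (α + 2) → ℝ, |ψ v - ψ w| ≤ c * dist v w)
    (hφ : ∀ v w : Fin (β + 2) → ℝ, |φ v - φ w| ≤ c * dist v w)
    (f : Fin 2 → Fin 2 → (Fin (α + 2) → ℝ) → ℝ) (g : Fin 2 → Fin 2 → (Fin (β + 2) → ℝ) → ℝ)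
    (hfpos : ∀ (k l : Fin 2) (v : Fin (α + 2) → ℝ), (∀ m, 0 < v m) → 0 < f k l v)
    (hgpos : ∀ (k l : Fin 2) (v : Fin (β + 2) → ℝ), (∀ m, 0 < v m) → 0 < g k l v)
    (hf : ∀ (k l : Fin 2) (v : Fin (α + 2) → ℝ), (∀ m, 0 < v m) →
      |Real.log (f k l v) / Real.log t - ψ (fun m => Real.log (v m) / Real.log t)|
        ≤ Real.log M / Real.log t)
    (hg : ∀ (k l : Fin 2) (v : Fin (β + 2) → ℝ), (∀ m, 0 < v m) →
      |Real.log (g k l v) / Real.log t - φ (fun m => Real.log (v m) / Real.log t)|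
        ≤ Real.log M / Real.log t)
    (z w : Fin 2 → ℕ → ℕ → ℝ)
    (hzpos : ∀ (l : Fin 2) (i j : ℕ), 0 < z l i j)
    (hwpos : ∀ (l : Fin 2) (i j : ℕ), 0 < w l i j)
    (hzlow : ∀ (l : Fin 2) (i j : ℕ),
      f 0 l (Fin.cons (w l i j) (fun k : Fin (α + 1) => z l (i + (k : ℕ)) j)) ≤ z l i (j + 1))
    (hzhigh : ∀ (l : Fin 2) (i j : ℕ),
      z l i (j + 1) ≤ f 1 l (Fin.cons (w l i j) (fun k : Fin (α + 1) => z l (i + (k : ℕ)) j)))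
    (hwlow : ∀ (l : Fin 2) (i j : ℕ),
      g 0 l (Fin.cons (w l i j) (fun k : Fin (β + 1) => z l (i + (k : ℕ)) j)) ≤ w l (i + 1) j)
    (hwhigh : ∀ (l : Fin 2) (i j : ℕ),
      w l (i + 1) j ≤ g 1 l (Fin.cons (w l i j) (fun k : Fin (β + 1) => z l (i + (k : ℕ)) j)))
    (ρ : ℝ) (hρ : 1 ≤ ρ)
    (hρz : ∀ i, z 0 i 0 / z 1 i 0 ≤ ρ ∧ z 1 i 0 / z 0 i 0 ≤ ρ)
    (hρw : ∀ j, w 0 0 j / w 1 0 j ≤ ρ ∧ w 1 0 j / w 0 0 j ≤ ρ) :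
    ∀ i j : ℕ,
      max (z 0 i (j + 1) / z 1 i (j + 1)) (z 1 i (j + 1) / z 0 i (j + 1))
        ≤ M ^ (6 * ∑ k ∈ Finset.range (i + j * (max α β + 1) + 1), c ^ k)
          * ρ ^ ((max c 1) ^ (i + 1 + j * (max α β + 1))) ∧
      max (w 0 (i + 1) j / w 1 (i + 1) j) (w 1 (i + 1) j / w 0 (i + 1) j)
        ≤ M ^ (6 * ∑ k ∈ Finset.range (i + j * (max α β + 1) + 1), c ^ k)
          * ρ ^ ((max c 1) ^ (i + 1 + j * (max α β + 1))) := by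
  have hlt : (0:ℝ) < Real.log t := Real.log_pos ht
  set γ := max α β with hγ
  have hγα : α ≤ γ := le_max_left _ _
  have hγβ : β ≤ γ := le_max_right _ _
  set μ := Real.log M / Real.log t with hμdef
  have hμ : 0 ≤ μ := div_nonneg (Real.log_nonneg hM) hlt.le
  set r := Real.log ρ / Real.log t with hrdef
  have hr : 0 ≤ r := div_nonneg (Real.log_nonneg hρ) hlt.le
  set ct := max c 1 with hctdef
  have hct : 1 ≤ ct := le_max_right _ _
  have hcct : c ≤ ct := le_max_left _ _
  set B : ℕ → ℝ := fun n => Bfun μ r ct c n with hBdef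
  have hBr : ∀ n, r ≤ B n := fun n => Bfun_r_le hμ hr hct hc n
  have hB0 : ∀ n, 0 ≤ B n := fun n => Bfun_nonneg hμ hr hct hc n
  have hBmono : ∀ {m n : ℕ}, m ≤ n → B m ≤ B n := fun h => Bfun_mono hμ hr hct hc h
  have hBstep : ∀ n, 2 * μ + c * B n ≤ B (n + 1) := fun n => Bfun_step hμ hr hct hc hcct n
  -- base cases in log scale
  have ratio_log : ∀ a b : ℝ, 0 < a → 0 < b → a / b ≤ ρ → b / a ≤ ρ →
      |Real.log a / Real.log t - Real.log b / Real.log t| ≤ r := by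
    intro a b ha hb h1 h2
    have l1 : Real.log (a / b) ≤ Real.log ρ := Real.log_le_log (div_pos ha hb) h1
    have l2 : Real.log (b / a) ≤ Real.log ρ := Real.log_le_log (div_pos hb ha) h2
    rw [Real.log_div ha.ne' hb.ne'] at l1
    rw [Real.log_div hb.ne' ha.ne'] at l2
    have habs : |Real.log a - Real.log b| ≤ Real.log ρ := abs_le.mpr ⟨by linarith, by linarith⟩
    calc |Real.log a / Real.log t - Real.log b / Real.log t|
        = |Real.log a - Real.log b| / Real.log t := by
          rw [← sub_div, abs_div, abs_of_pos hlt]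
      _ ≤ Real.log ρ / Real.log t := div_le_div_of_nonneg_right habs hlt.le
      _ = r := hrdef.symm
  have hbaseZ : ∀ i : ℕ, |Real.log (z 0 i 0) / Real.log t - Real.log (z 1 i 0) / Real.log t| ≤ r :=
    fun i => ratio_log _ _ (hzpos 0 i 0) (hzpos 1 i 0) (hρz i).1 (hρz i).2
  have hbaseW : ∀ j : ℕ, |Real.log (w 0 0 j) / Real.log t - Real.log (w 1 0 j) / Real.log t| ≤ r :=
    fun j => ratio_log _ _ (hwpos 0 0 j) (hwpos 1 0 j) (hρw j).1 (hρw j).2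
  -- step lemmas
  have Zstep : ∀ (i j n : ℕ),
      |Real.log (w 0 i j) / Real.log t - Real.log (w 1 i j) / Real.log t| ≤ B n →
      (∀ k : Fin (α + 1),
        |Real.log (z 0 (i + (k:ℕ)) j) / Real.log t - Real.log (z 1 (i + (k:ℕ)) j) / Real.log t| ≤ B n) →
      |Real.log (z 0 i (j+1)) / Real.log t - Real.log (z 1 i (j+1)) / Real.log t| ≤ B (n + 1) := by
    intro i j n hwb hzb
    set v : Fin 2 → Fin (α + 2) → ℝ :=
      fun l => Fin.cons (w l i j) (fun k : Fin (α + 1) => z l (i + (k:ℕ)) j) with hv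
    have hvpos : ∀ l m, 0 < v l m := by
      intro l m
      refine Fin.cases ?_ (fun k => ?_) m
      · simpa [hv] using hwpos l i j
      · simpa [hv] using hzpos l (i + (k:ℕ)) j
    have hclose : ∀ l : Fin 2,
        |Real.log (z l i (j+1)) / Real.log t -
          ψ (fun m => Real.log (v l m) / Real.log t)| ≤ μ := by
      intro l
      exact close_aux ht (hzpos l i (j+1)) (hfpos 0 l (v l) (hvpos l))
        (hf 0 l (v l) (hvpos l)) (hf 1 l (v l) (hvpos l)) (hzlow l i j) (hzhigh l i j)
    have hdist : dist (fun m => Real.log (v 0 m) / Real.log t)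
        (fun m => Real.log (v 1 m) / Real.log t) ≤ B n := by
      rw [dist_pi_le_iff (hB0 n)]
      intro m
      refine Fin.cases ?_ (fun k => ?_) m
      · simpa [hv, Real.dist_eq] using hwb
      · simpa [hv, Real.dist_eq] using hzb k
    exact le_trans (two_close hc hψ (hclose 0) (hclose 1) hdist) (hBstep n)
  have Wstep : ∀ (i j n : ℕ),
      |Real.log (w 0 i j) / Real.log t - Real.log (w 1 i j) / Real.log t| ≤ B n →
      (∀ k : Fin (β + 1),
        |Real.log (z 0 (i + (k:ℕ)) j) / Real.log t - Real.log (z 1 (i + (k:ℕ)) j) / Real.log t| ≤ B n) →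
      |Real.log (w 0 (i+1) j) / Real.log t - Real.log (w 1 (i+1) j) / Real.log t| ≤ B (n + 1) := by
    intro i j n hwb hzb
    set v : Fin 2 → Fin (β + 2) → ℝ :=
      fun l => Fin.cons (w l i j) (fun k : Fin (β + 1) => z l (i + (k:ℕ)) j) with hv
    have hvpos : ∀ l m, 0 < v l m := by
      intro l m
      refine Fin.cases ?_ (fun k => ?_) m
      · simpa [hv] using hwpos l i j
      · simpa [hv] using hzpos l (i + (k:ℕ)) j
    have hclose : ∀ l : Fin 2,
        |Real.log (w l (i+1) j) / Real.log t -
          φ (fun m => Real.log (v l m) / Real.log t)| ≤ μ := by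
      intro l
      exact close_aux ht (hwpos l (i+1) j) (hgpos 0 l (v l) (hvpos l))
        (hg 0 l (v l) (hvpos l)) (hg 1 l (v l) (hvpos l)) (hwlow l i j) (hwhigh l i j)
    have hdist : dist (fun m => Real.log (v 0 m) / Real.log t)
        (fun m => Real.log (v 1 m) / Real.log t) ≤ B n := by
      rw [dist_pi_le_iff (hB0 n)]
      intro m
      refine Fin.cases ?_ (fun k => ?_) m
      · simpa [hv, Real.dist_eq] using hwb
      · simpa [hv, Real.dist_eq] using hzb k
    exact le_trans (two_close hc hφ (hclose 0) (hclose 1) hdist) (hBstep n)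
  -- bound profiles
  have BZle : ∀ (i j k : ℕ), k ≤ γ →
      (match j with | 0 => r | Nat.succ j' => B (i + k + j' * (γ + 1) + 1)) ≤ B (i + j * (γ + 1)) := by
    intro i j k hk
    match j with
    | 0 => simpa using hBr (i + 0)
    | Nat.succ j' =>
      refine hBmono ?_
      calc i + k + j' * (γ + 1) + 1 = i + j' * (γ + 1) + (k + 1) := by ring
        _ ≤ i + j' * (γ + 1) + (γ + 1) := Nat.add_le_add_left (by omega) _
        _ = i + (j' + 1) * (γ + 1) := by ring
  -- main induction
  have main : ∀ j : ℕ,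
      (∀ i, |Real.log (z 0 i j) / Real.log t - Real.log (z 1 i j) / Real.log t|
        ≤ (match j with | 0 => r | Nat.succ j' => B (i + j' * (γ + 1) + 1))) ∧
      (∀ i, |Real.log (w 0 i j) / Real.log t - Real.log (w 1 i j) / Real.log t|
        ≤ (match i with | 0 => r | Nat.succ i' => B (i' + j * (γ + 1) + 1))) := by
    intro j
    induction j with
    | zero =>
      refine ⟨fun i => hbaseZ i, fun i => ?_⟩
      induction i with
      | zero => exact hbaseW 0
      | succ i ihW =>
        show _ ≤ B (i + 0 * (γ + 1) + 1)
        refine Wstep i 0 (i + 0 * (γ + 1)) ?_ ?_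
        · refine le_trans ihW ?_
          match i with
          | 0 => exact hBr _
          | Nat.succ i' => exact hBmono (Nat.le_of_eq (add_right_comm _ _ _))
        · intro k; exact le_trans (hbaseZ (i + (k:ℕ))) (hBr _)
    | succ j ih =>
      obtain ⟨ihZ, ihW⟩ := ih
      have hZ : ∀ i, |Real.log (z 0 i (j+1)) / Real.log t - Real.log (z 1 i (j+1)) / Real.log t|
          ≤ B (i + j * (γ + 1) + 1) := by
        intro i
        refine Zstep i j (i + j * (γ + 1)) ?_ ?_
        · refine le_trans (ihW i) ?_
          match i with
          | 0 => exact hBr _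
          | Nat.succ i' => exact hBmono (Nat.le_of_eq (add_right_comm _ _ _))
        · intro k
          refine le_trans (ihZ (i + (k:ℕ))) ?_
          have hk : (k:ℕ) ≤ γ := le_trans (Nat.le_of_lt_succ k.isLt) hγα
          exact BZle i j (k:ℕ) hk
      refine ⟨hZ, fun i => ?_⟩
      induction i with
      | zero => exact hbaseW (j+1)
      | succ i ihW2 =>
        show _ ≤ B (i + (j+1) * (γ + 1) + 1)
        refine Wstep i (j+1) (i + (j+1) * (γ + 1)) ?_ ?_
        · refine le_trans ihW2 ?_
          match i with
          | 0 => exact hBr _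
          | Nat.succ i' => exact hBmono (Nat.le_of_eq (add_right_comm _ _ _))
        · intro k
          refine le_trans (hZ (i + (k:ℕ))) ?_
          have hk : (k:ℕ) ≤ γ := le_trans (Nat.le_of_lt_succ k.isLt) hγβ
          exact BZle i (j+1) (k:ℕ) hk
  -- conversion back to ratios
  have hM0 : (0:ℝ) < M := lt_of_lt_of_le one_pos hM
  have hρ0 : (0:ℝ) < ρ := lt_of_lt_of_le one_pos hρ
  have conv : ∀ (S e a b : ℝ), 0 < a → 0 < b →
      |Real.log a / Real.log t - Real.log b / Real.log t| ≤ μ * S + r * e →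
      max (a / b) (b / a) ≤ M ^ S * ρ ^ e := by
    intro S e a b ha hb h
    have key : ∀ x y : ℝ, 0 < x → 0 < y →
        Real.log x / Real.log t - Real.log y / Real.log t ≤ μ * S + r * e →
        x / y ≤ M ^ S * ρ ^ e := by
      intro x y hx hy hxy
      have h2 : Real.log (x / y) ≤ Real.log M * S + Real.log ρ * e := by
        rw [Real.log_div hx.ne' hy.ne']
        have := mul_le_mul_of_nonneg_right hxy hlt.le
        rw [sub_mul, div_mul_cancel₀ _ hlt.ne', div_mul_cancel₀ _ hlt.ne'] at this
        have hμl : μ * Real.log t = Real.log M := by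
          rw [hμdef]; field_simp
        have hrl : r * Real.log t = Real.log ρ := by
          rw [hrdef]; field_simp
        have expand : (μ * S + r * e) * Real.log t = Real.log M * S + Real.log ρ * e := by
          calc (μ * S + r * e) * Real.log t
              = μ * Real.log t * S + r * Real.log t * e := by ring
            _ = Real.log M * S + Real.log ρ * e := by rw [hμl, hrl]
        linarith [this, expand.le, expand.ge]
      calc x / y = Real.exp (Real.log (x / y)) := (Real.exp_log (div_pos hx hy)).symm
        _ ≤ Real.exp (Real.log M * S + Real.log ρ * e) := Real.exp_le_exp.mpr h2
        _ = M ^ S * ρ ^ e := by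
            rw [Real.exp_add, Real.rpow_def_of_pos hM0, Real.rpow_def_of_pos hρ0]
    rw [abs_le] at h
    refine max_le (key a b ha hb h.2) (key b a hb ha (by linarith [h.1]))
  intro i j
  have hexp : ct ^ (i + 1 + j * (γ + 1)) = ct ^ (i + j * (γ + 1) + 1) := by
    congr 1; ring
  have hBform : ∀ n : ℕ, B (n + 1) =
      μ * (6 * ∑ k ∈ Finset.range (n + 1), c ^ k) + r * ct ^ (n + 1) := by
    intro n; rw [hBdef]; unfold Bfun; ring
  constructor
  · refine conv _ _ _ _ (hzpos 0 i (j+1)) (hzpos 1 i (j+1)) ?_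
    rw [hexp, ← hBform]
    exact (main (j+1)).1 i
  · refine conv _ _ _ _ (hwpos 0 (i+1) j) (hwpos 1 (i+1) j) ?_
    rw [hexp, ← hBform]
    exact (main j).2 (i+1)
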